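/- Let H be a real Hilbert space, let (V_i)_{i∈I} be a finite family of closed subspaces of H with orthogonal projections P_i : H → H onto V_i, and set P := Σ_{i∈I} P_i. Assume: (i) there is K₁ > 0 such that every u ∈ H admits a decomposition u = Σ_{i∈I} u_i with u_i ∈ V_i and Σ_{i∈I} ‖u_i‖² ≤ K₁ ‖u‖²; (ii) there is K₂ > 0 such that for every choice of u_i ∈ V_i one has ‖Σ_{i∈I} u_i‖² ≤ K₂ Σ_{i∈I} ‖u_i‖². Then K₁^{-1} ‖v‖² ≤ ⟨P v, v⟩ ≤ K₂ ‖v‖² for all v ∈ H. (Corollary 3.3 of the paper: spectral equivalence of the additive Schwarz operator.) -/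
import Mathlib


open scoped RealInnerProductSpace BigOperators

/-- Corollary 3.3 of the paper: spectral equivalence of the additive
Schwarz operator. Let `(V i)` be a finite family of closed subspaces of a real Hilbert
space `H`, with orthogonal projections `P i` onto `V i` (a bounded linear map with values
in `V i` satisfying `⟪P i u, w⟫ = ⟪u, w⟫` for all `w ∈ V i`), and `P = Σ P i`. If every
`u` admits a decomposition `u = Σ uᵢ`, `uᵢ ∈ V i`, with `Σ ‖uᵢ‖² ≤ K₁ ‖u‖²`, and
`‖Σ uᵢ‖² ≤ K₂ Σ ‖uᵢ‖²` for every such family, then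
`K₁⁻¹ ‖v‖² ≤ ⟪P v, v⟫ ≤ K₂ ‖v‖²` for all `v`. -/
theorem statement5 {H : Type*} [NormedAddCommGroup H] [InnerProductSpace ℝ H]
    [CompleteSpace H] {I : Type*} [Fintype I]
    (V : I → Submodule ℝ H) (hclosed : ∀ i, IsClosed (V i : Set H))
    (P : I → H →L[ℝ] H)
    (hPmem : ∀ i u, P i u ∈ V i)
    (hPproj : ∀ i u, ∀ w ∈ V i, ⟪P i u, w⟫ = ⟪u, w⟫)
    (K₁ K₂ : ℝ) (hK₁ : 0 < K₁) (hK₂ : 0 < K₂)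
    (h1 : ∀ u : H, ∃ uu : I → H, (∀ i, uu i ∈ V i) ∧ u = ∑ i, uu i ∧
      ∑ i, ‖uu i‖ ^ 2 ≤ K₁ * ‖u‖ ^ 2)
    (h2 : ∀ uu : I → H, (∀ i, uu i ∈ V i) → ‖∑ i, uu i‖ ^ 2 ≤ K₂ * ∑ i, ‖uu i‖ ^ 2)
    (v : H) :
    K₁⁻¹ * ‖v‖ ^ 2 ≤ ⟪∑ i, P i v, v⟫ ∧ ⟪∑ i, P i v, v⟫ ≤ K₂ * ‖v‖ ^ 2 := by
  have key : ⟪∑ i, P i v, v⟫ = ∑ i, ‖P i v‖ ^ 2 := by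
    rw [sum_inner]
    refine Finset.sum_congr rfl fun i _ => ?_
    rw [real_inner_comm, ← hPproj i v (P i v) (hPmem i v),
      real_inner_self_eq_norm_sq]
  have tnonneg : 0 ≤ ⟪∑ i, P i v, v⟫ := by
    rw [key]; exact Finset.sum_nonneg fun i _ => sq_nonneg _
  constructor
  · -- lower bound
    obtain ⟨uu, hmem, hdecomp, hsum⟩ := h1 v
    have step1 : ‖v‖ ^ 2 ≤ ∑ i, ‖P i v‖ * ‖uu i‖ := by
      calc ‖v‖ ^ 2 = ⟪v, v⟫ := (real_inner_self_eq_norm_sq v).symm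
        _ = ⟪v, ∑ i, uu i⟫ := by rw [← hdecomp]
        _ = ∑ i, ⟪v, uu i⟫ := inner_sum _ _ _
        _ = ∑ i, ⟪P i v, uu i⟫ := by
            refine Finset.sum_congr rfl fun i _ => ?_
            rw [hPproj i v (uu i) (hmem i)]
        _ ≤ ∑ i, ‖P i v‖ * ‖uu i‖ :=
            Finset.sum_le_sum fun i _ => real_inner_le_norm _ _
    have cs : (∑ i, ‖P i v‖ * ‖uu i‖) ^ 2 ≤
        (∑ i, ‖P i v‖ ^ 2) * (∑ i, ‖uu i‖ ^ 2) :=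
      Finset.sum_mul_sq_le_sq_mul_sq _ _ _
    have hv4 : (‖v‖ ^ 2) ^ 2 ≤ ⟪∑ i, P i v, v⟫ * (K₁ * ‖v‖ ^ 2) := by
      calc (‖v‖ ^ 2) ^ 2 ≤ (∑ i, ‖P i v‖ * ‖uu i‖) ^ 2 :=
            pow_le_pow_left₀ (sq_nonneg _) step1 2
        _ ≤ (∑ i, ‖P i v‖ ^ 2) * (∑ i, ‖uu i‖ ^ 2) := cs
        _ ≤ (∑ i, ‖P i v‖ ^ 2) * (K₁ * ‖v‖ ^ 2) := by
            refine mul_le_mul_of_nonneg_left hsum ?_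
            exact Finset.sum_nonneg fun i _ => sq_nonneg _
        _ = ⟪∑ i, P i v, v⟫ * (K₁ * ‖v‖ ^ 2) := by rw [key]
    rcases eq_or_ne (‖v‖ ^ 2) 0 with hv | hv
    · rw [hv, mul_zero]; exact tnonneg
    · have hvpos : 0 < ‖v‖ ^ 2 := lt_of_le_of_ne (sq_nonneg _) (Ne.symm hv)
      rw [inv_mul_le_iff₀ hK₁]
      nlinarith [hv4]
  · -- upper bound
    have h2' := h2 (fun i => P i v) (fun i => hPmem i v)
    have cauchy : ⟪∑ i, P i v, v⟫ ≤ ‖∑ i, P i v‖ * ‖v‖ := real_inner_le_norm _ _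
    have hsq : ⟪∑ i, P i v, v⟫ ^ 2 ≤ (K₂ * ⟪∑ i, P i v, v⟫) * ‖v‖ ^ 2 := by
      calc ⟪∑ i, P i v, v⟫ ^ 2 ≤ (‖∑ i, P i v‖ * ‖v‖) ^ 2 :=
            pow_le_pow_left₀ tnonneg cauchy 2
        _ = ‖∑ i, P i v‖ ^ 2 * ‖v‖ ^ 2 := by ring
        _ ≤ (K₂ * ∑ i, ‖P i v‖ ^ 2) * ‖v‖ ^ 2 :=
            mul_le_mul_of_nonneg_right h2' (sq_nonneg _)
        _ = (K₂ * ⟪∑ i, P i v, v⟫) * ‖v‖ ^ 2 := by rw [key]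
    rcases eq_or_lt_of_le tnonneg with ht0 | htpos
    · rw [← ht0]; positivity
    · nlinarith [hsq, htpos]
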